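/- Let C be a shortest even hole of a graph G with ||C|| ≥ 24 such that G contains no C-bad path. If u and v are vertices of C with d_C(u,v) > ||C||/4 + c for appropriate slack (precisely, d_C(u,v) > 2ℓ + r₁ + r₃ where ||C|| = 8ℓ + 2(r₁+r₂+r₃) with r₁ ≥ r₂ ≥ r₃ in {0,1}), then d_G(u,v) ≥ 2ℓ + r₁ + r₃. -/

import Mathlib

open SimpleGraph

variable {V : Type*}

def IsHole (G : SimpleGraph V) {v : V} (C : G.Walk v v) : Prop :=
  C.IsCycle ∧ 4 ≤ C.length ∧
    ∀ x y : V, x ∈ C.support → y ∈ C.support → G.Adj x y → s(x, y) ∈ C.edges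

def IsShortestEvenHole (G : SimpleGraph V) {v : V} (C : G.Walk v v) : Prop :=
  IsHole G C ∧ Even C.length ∧
    ∀ (w : V) (D : G.Walk w w), IsHole G D → Even D.length → C.length ≤ D.length

/-- Distance between `a` and `b` inside the cycle `C`: the least length of a path of `C`
between them. -/
noncomputable def cycleDist (G : SimpleGraph V) {v : V} (C : G.Walk v v) (a b : V) : ℕ :=
  sInf {n | ∃ P : G.Walk a b, P.IsPath ∧ (∀ e ∈ P.edges, e ∈ C.edges) ∧ P.length = n}

/-- `P` is a `C`-bad path for the shortest even hole `C`. -/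
def IsCBad (G : SimpleGraph V) {w u v : V} (C : G.Walk w w) (P : G.Walk u v) : Prop :=
  u ≠ v ∧ ¬ G.Adj u v ∧ u ∈ C.support ∧ v ∈ C.support ∧ P.IsPath ∧
  2 ≤ P.length ∧ P.length ≤ cycleDist G C u v ∧ 4 * P.length < C.length ∧
  ∀ Q : G.Walk u v, Q.IsPath → (∀ e ∈ Q.edges, e ∈ C.edges) →
    ¬ ∃ D : G.Walk u u, IsShortestEvenHole G D ∧
        {z | z ∈ D.support} = {z | z ∈ P.support} ∪ {z | z ∈ Q.support}

namespace StmtAux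

open SimpleGraph.Walk

variable {G : SimpleGraph V}

lemma end_mem_tail {u v : V} (p : G.Walk u v) (hp : ¬ p.Nil) : v ∈ p.support.tail := by
  cases p with
  | nil => simp at hp
  | cons h q => simpa using q.end_mem_support

lemma firstDart_mem {a b : V} (p : G.Walk a b) (hp : ¬ p.Nil) :
    ∃ d ∈ p.darts, d.fst = a ∧ d.snd = p.getVert 1 := by
  cases p with
  | nil => simp at hp
  | cons h q =>
    refine ⟨⟨(a, _), h⟩, by simp, rfl, ?_⟩
    simp [Walk.getVert_cons_succ, Walk.getVert_cons]

lemma firstEdge_mem {a b : V} (p : G.Walk a b) (hp : ¬ p.Nil) :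
    s(a, p.getVert 1) ∈ p.edges := by
  obtain ⟨d, hd, hf, hs⟩ := firstDart_mem p hp
  have he : d.edge = s(a, p.getVert 1) := by
    rw [show d.edge = s(d.fst, d.snd) from rfl, hf, hs]
  rw [← he]
  exact List.mem_map_of_mem (f := Dart.edge) hd

lemma dropLast_support_nodup {u : V} {p : G.Walk u u} (hp : p.IsCycle) :
    p.support.dropLast.Nodup := by
  have ht : p.support.tail.Nodup := hp.support_nodup
  have hmem : u ∈ p.support.tail := end_mem_tail p hp.not_nil
  have hne : p.support.tail ≠ [] := List.ne_nil_of_mem hmem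
  have hlast : p.support.tail.getLast hne = u := by
    rw [List.getLast_tail]
    exact p.getLast_support
  have hsplit : p.support.tail.dropLast ++ [u] = p.support.tail := by
    have h := List.dropLast_append_getLast hne
    rw [hlast] at h
    exact h
  have hnd : (p.support.tail.dropLast ++ [u]).Nodup := by rw [hsplit]; exact ht
  rw [List.nodup_append] at hnd
  obtain ⟨h1, _, h3⟩ := hnd
  have hdl : p.support.dropLast = u :: p.support.tail.dropLast := by
    conv_lhs => rw [p.support_eq_cons]
    rw [List.dropLast_cons_of_ne_nil hne]
  rw [hdl]
  exact List.nodup_cons.mpr ⟨fun h => (h3 u h u (by simp) rfl), h1⟩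

lemma isCycle_reverse {u : V} {C : G.Walk u u} (hC : C.IsCycle) : C.reverse.IsCycle := by
  rw [Walk.isCycle_def]
  refine ⟨hC.isTrail.reverse _, ?_, ?_⟩
  · intro h
    apply hC.ne_nil
    have := congrArg Walk.reverse h
    simpa [Walk.reverse_reverse] using this
  · rw [Walk.support_reverse, List.tail_reverse]
    exact List.nodup_reverse.mpr (dropLast_support_nodup hC)

lemma two_neighbors {w x : V} {C : G.Walk w w} (hC : C.IsCycle) {a b c : V}
    (ha : s(x, a) ∈ C.edges) (hb : s(x, b) ∈ C.edges) (hc : s(x, c) ∈ C.edges) :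
    a = b ∨ a = c ∨ b = c := by
  by_contra hcon
  push_neg at hcon
  obtain ⟨hab, hac, hbc⟩ := hcon
  have hfstN : (C.darts.map (·.fst)).Nodup := by
    rw [Walk.map_fst_darts]; exact dropLast_support_nodup hC
  have hsndN : (C.darts.map (·.snd)).Nodup := by
    rw [Walk.map_snd_darts]; exact hC.support_nodup
  have Hf : ∀ d₁ d₂ : G.Dart, d₁ ∈ C.darts → d₂ ∈ C.darts → d₁.fst = x → d₂.fst = x →
      d₁.snd = d₂.snd := by
    intro d₁ d₂ h₁ h₂ e₁ e₂
    have : d₁ = d₂ := List.inj_on_of_nodup_map hfstN h₁ h₂ (e₁.trans e₂.symm)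
    rw [this]
  have Hs : ∀ d₁ d₂ : G.Dart, d₁ ∈ C.darts → d₂ ∈ C.darts → d₁.snd = x → d₂.snd = x →
      d₁.fst = d₂.fst := by
    intro d₁ d₂ h₁ h₂ e₁ e₂
    have : d₁ = d₂ := List.inj_on_of_nodup_map hsndN h₁ h₂ (e₁.trans e₂.symm)
    rw [this]
  have key : ∀ y : V, s(x, y) ∈ C.edges →
      (∃ d ∈ C.darts, d.fst = x ∧ d.snd = y) ∨ (∃ d ∈ C.darts, d.fst = y ∧ d.snd = x) := by
    intro y hy
    obtain ⟨d, hd, hedge⟩ := List.mem_map.mp hy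
    have : s(d.fst, d.snd) = s(x, y) := hedge
    rw [Sym2.eq_iff] at this
    rcases this with ⟨h1, h2⟩ | ⟨h1, h2⟩
    · exact Or.inl ⟨d, hd, h1, h2⟩
    · exact Or.inr ⟨d, hd, h1, h2⟩
  rcases key a ha with ⟨da, hda, hda1, hda2⟩ | ⟨da, hda, hda1, hda2⟩ <;>
    rcases key b hb with ⟨db, hdb, hdb1, hdb2⟩ | ⟨db, hdb, hdb1, hdb2⟩ <;>
    rcases key c hc with ⟨dc, hdc, hdc1, hdc2⟩ | ⟨dc, hdc, hdc1, hdc2⟩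
  · exact hab ((hda2.symm.trans (Hf da db hda hdb hda1 hdb1)).trans hdb2)
  · exact hab ((hda2.symm.trans (Hf da db hda hdb hda1 hdb1)).trans hdb2)
  · exact hac ((hda2.symm.trans (Hf da dc hda hdc hda1 hdc1)).trans hdc2)
  · exact hbc ((hdb1.symm.trans (Hs db dc hdb hdc hdb2 hdc2)).trans hdc1)
  · exact hbc ((hdb2.symm.trans (Hf db dc hdb hdc hdb1 hdc1)).trans hdc2)
  · exact hac ((hda1.symm.trans (Hs da dc hda hdc hda2 hdc2)).trans hdc1)
  · exact hab ((hda1.symm.trans (Hs da db hda hdb hda2 hdb2)).trans hdb1)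
  · exact hab ((hda1.symm.trans (Hs da db hda hdb hda2 hdb2)).trans hdb1)

lemma edge_start_cases {u : V} {C : G.Walk u u} (hC : C.IsCycle) {z : V}
    (hz : s(u, z) ∈ C.edges) : z = C.getVert 1 ∨ z = C.reverse.getVert 1 := by
  have hnil : ¬ C.Nil := hC.not_nil
  have hrnil : ¬ C.reverse.Nil := by
    rw [Walk.nil_iff_length_eq, Walk.length_reverse]
    rw [Walk.nil_iff_length_eq] at hnil
    exact hnil
  have hfstN : (C.darts.map (·.fst)).Nodup := by
    rw [Walk.map_fst_darts]; exact dropLast_support_nodup hC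
  have hsndN : (C.darts.map (·.snd)).Nodup := by
    rw [Walk.map_snd_darts]; exact hC.support_nodup
  obtain ⟨d, hd, hedge⟩ := List.mem_map.mp hz
  have hde : s(d.fst, d.snd) = s(u, z) := hedge
  rw [Sym2.eq_iff] at hde
  rcases hde with ⟨h1, h2⟩ | ⟨h1, h2⟩
  · left
    obtain ⟨d₀, hd₀, h₀f, h₀s⟩ := firstDart_mem C hnil
    have : d = d₀ := List.inj_on_of_nodup_map hfstN hd hd₀ (by rw [h1, h₀f])
    rw [← h2, this, h₀s]
  · right
    obtain ⟨d₁, hd₁, h₁f, h₁s⟩ := firstDart_mem C.reverse hrnil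
    have hd₁' : d₁.symm ∈ C.darts := Walk.mem_darts_reverse.mp hd₁
    have : d = d₁.symm := by
      apply List.inj_on_of_nodup_map hsndN hd hd₁'
      show d.snd = d₁.symm.snd
      rw [h2, Dart.symm_toProd]
      exact h₁f.symm
    have hzf : z = d.fst := h1.symm
    rw [hzf, this]
    show d₁.snd = C.reverse.getVert 1
    exact h₁s

lemma cycle_path_unique {w : V} {C : G.Walk w w} (hC : C.IsCycle) :
    ∀ (n : ℕ) {u v : V} (Q₁ Q₂ : G.Walk u v), Q₁.length ≤ n → Q₁.IsPath → Q₂.IsPath →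
      (∀ e ∈ Q₁.edges, e ∈ C.edges) → (∀ e ∈ Q₂.edges, e ∈ C.edges) → u ≠ v →
      Q₁.getVert 1 = Q₂.getVert 1 → Q₁ = Q₂ := by
  intro n
  induction n with
  | zero =>
    intro u v Q₁ Q₂ hlen _ _ _ _ huv _
    exact absurd (Walk.eq_of_length_eq_zero (Nat.le_zero.mp hlen)) huv
  | succ n ih =>
    intro u v Q₁ Q₂ hlen h₁ h₂ he₁ he₂ huv hg
    cases Q₁ with
    | nil => exact absurd rfl huv
    | @cons _ x₁ _ a₁ R₁ =>
      cases Q₂ with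
      | nil => exact absurd rfl huv
      | @cons _ x₂ _ a₂ R₂ =>
        have hx : x₁ = x₂ := by
          simpa [Walk.getVert_cons_succ, Walk.getVert_cons] using hg
        subst hx
        by_cases hxv : x₁ = v
        · subst hxv
          have hn₁ : R₁ = Walk.nil := Walk.isPath_iff_eq_nil.mp h₁.of_cons
          have hn₂ : R₂ = Walk.nil := Walk.isPath_iff_eq_nil.mp h₂.of_cons
          rw [hn₁, hn₂]
        · have hR₁nil : ¬ R₁.Nil := Walk.not_nil_of_ne hxv
          have hR₂nil : ¬ R₂.Nil := Walk.not_nil_of_ne hxv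
          have hu₁ : u ∉ R₁.support := ((Walk.cons_isPath_iff _ _).mp h₁).2
          have hu₂ : u ∉ R₂.support := ((Walk.cons_isPath_iff _ _).mp h₂).2
          have hy₁ : R₁.getVert 1 ∈ R₁.support := by
            rw [Walk.mem_support_iff_exists_getVert]
            refine ⟨1, rfl, ?_⟩
            rw [Walk.not_nil_iff_lt_length] at hR₁nil
            omega
          have hy₂ : R₂.getVert 1 ∈ R₂.support := by
            rw [Walk.mem_support_iff_exists_getVert]
            refine ⟨1, rfl, ?_⟩
            rw [Walk.not_nil_iff_lt_length] at hR₂nil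
            omega
          have e₀ : s(x₁, u) ∈ C.edges := by
            rw [Sym2.eq_swap]
            exact he₁ _ (by simp)
          have e₁ : s(x₁, R₁.getVert 1) ∈ C.edges :=
            he₁ _ (by rw [Walk.edges_cons]; exact List.mem_cons_of_mem _ (firstEdge_mem R₁ hR₁nil))
          have e₂ : s(x₁, R₂.getVert 1) ∈ C.edges :=
            he₂ _ (by rw [Walk.edges_cons]; exact List.mem_cons_of_mem _ (firstEdge_mem R₂ hR₂nil))
          have htri := two_neighbors hC e₀ e₁ e₂
          have hy : R₁.getVert 1 = R₂.getVert 1 := by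
            rcases htri with h | h | h
            · exact absurd (h ▸ hy₁) hu₁
            · exact absurd (h ▸ hy₂) hu₂
            · exact h
          have hR : R₁ = R₂ := by
            apply ih R₁ R₂ (by simpa using Nat.succ_le_succ_iff.mp hlen) h₁.of_cons h₂.of_cons
              (fun e he => he₁ e (by rw [Walk.edges_cons]; exact List.mem_cons_of_mem _ he))
              (fun e he => he₂ e (by rw [Walk.edges_cons]; exact List.mem_cons_of_mem _ he))
              hxv hy
          rw [hR]

lemma arc_paths [DecidableEq V] {u : V} {C : G.Walk u u} (hC : C.IsCycle) {v : V}
    (hv : v ∈ C.support) (hvu : v ≠ u) :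
    (C.takeUntil v hv).IsPath ∧ (C.dropUntil v hv).IsPath := by
  have spec : (C.takeUntil v hv).append (C.dropUntil v hv) = C := C.take_spec hv
  set A := C.takeUntil v hv with hA
  set B := C.dropUntil v hv with hB
  have hsup : A.support ++ B.support.tail = C.support := by
    rw [← Walk.support_append, spec]
  have htails : A.support.tail ++ B.support.tail = C.support.tail := by
    have h1 := hsup
    rw [A.support_eq_cons, C.support_eq_cons] at h1
    rw [List.cons_append] at h1; exact List.tail_eq_of_cons_eq h1
  have hnodup : (A.support.tail ++ B.support.tail).Nodup := by
    rw [htails]; exact hC.support_nodup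
  rw [List.nodup_append] at hnodup
  obtain ⟨hAt, hBt, hdisj⟩ := hnodup
  have hBnil : ¬ B.Nil := Walk.not_nil_of_ne hvu
  have hAnil : ¬ A.Nil := Walk.not_nil_of_ne hvu.symm
  have huB : u ∈ B.support.tail := end_mem_tail B hBnil
  have hvA : v ∈ A.support.tail := end_mem_tail A hAnil
  constructor
  · rw [Walk.isPath_def, A.support_eq_cons]
    exact List.nodup_cons.mpr ⟨fun h => hdisj u h u huB rfl, hAt⟩
  · rw [Walk.isPath_def, B.support_eq_cons]
    exact List.nodup_cons.mpr ⟨fun h => hdisj v hvA v h rfl, hBt⟩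

lemma getVert_one_takeUntil [DecidableEq V] {u x : V} (C : G.Walk u x) {v : V}
    (hv : v ∈ C.support) (hvu : u ≠ v) :
    (C.takeUntil v hv).getVert 1 = C.getVert 1 := by
  have spec : (C.takeUntil v hv).append (C.dropUntil v hv) = C := C.take_spec hv
  set A := C.takeUntil v hv with hA
  set B := C.dropUntil v hv with hB
  have hAnil : ¬ A.Nil := Walk.not_nil_of_ne hvu
  have h1 : 1 ≤ A.length := by
    rw [Walk.not_nil_iff_lt_length] at hAnil; omega
  have hC1 : C.getVert 1 = (A.append B).getVert 1 := by rw [spec]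
  rw [hC1, Walk.getVert_append]
  by_cases h : 1 < A.length
  · simp [h]
  · have hA1 : A.length = 1 := by omega
    have : ¬ (1 < A.length) := h
    simp only [this, if_false]
    rw [show 1 - A.length = 0 from by omega, Walk.getVert_zero]
    conv_lhs => rw [← hA1]
    exact Walk.getVert_length A

lemma length_take_add_drop [DecidableEq V] {u x : V} (C : G.Walk u x) {v : V}
    (hv : v ∈ C.support) :
    (C.takeUntil v hv).length + (C.dropUntil v hv).length = C.length := by
  have spec : (C.takeUntil v hv).append (C.dropUntil v hv) = C := C.take_spec hv
  conv_rhs => rw [← spec]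
  rw [Walk.length_append]

lemma arc_compl_aux [DecidableEq V] {u : V} {C : G.Walk u u} (hC : C.IsCycle) {v : V}
    (hv : v ∈ C.support) (huv : u ≠ v) (Q : G.Walk u v) (hQ : Q.IsPath)
    (hQe : ∀ e ∈ Q.edges, e ∈ C.edges) (h1 : Q.getVert 1 = C.getVert 1) :
    ∃ Q' : G.Walk u v, Q'.IsPath ∧ (∀ e ∈ Q'.edges, e ∈ C.edges) ∧
      Q.length + Q'.length = C.length := by
  obtain ⟨hA, hB⟩ := arc_paths hC hv huv.symm
  have hQA : Q = C.takeUntil v hv := by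
    apply cycle_path_unique hC Q.length Q _ le_rfl hQ hA hQe
      (fun e he => C.edges_takeUntil_subset hv he) huv
    rw [h1, getVert_one_takeUntil C hv huv]
  refine ⟨(C.dropUntil v hv).reverse, hB.reverse, ?_, ?_⟩
  · intro e he
    rw [Walk.edges_reverse, List.mem_reverse] at he
    exact C.edges_dropUntil_subset hv he
  · rw [hQA, Walk.length_reverse]
    exact length_take_add_drop C hv

lemma mem_support_iff_mem_tail {a : V} {p : G.Walk a a} (hp : ¬ p.Nil) (x : V) :
    x ∈ p.support ↔ x ∈ p.support.tail := by
  constructor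
  · intro h
    rw [p.support_eq_cons, List.mem_cons] at h
    rcases h with h | h
    · rw [h]; exact end_mem_tail p hp
    · exact h
  · intro h
    rw [p.support_eq_cons]
    exact List.mem_cons_of_mem _ h

lemma arc_compl [DecidableEq V] {w : V} {C : G.Walk w w} (hC : C.IsCycle) {u v : V}
    (hu : u ∈ C.support) (hv : v ∈ C.support) (huv : u ≠ v) (Q : G.Walk u v) (hQ : Q.IsPath)
    (hQe : ∀ e ∈ Q.edges, e ∈ C.edges) :
    ∃ Q' : G.Walk u v, Q'.IsPath ∧ (∀ e ∈ Q'.edges, e ∈ C.edges) ∧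
      Q.length + Q'.length = C.length := by
  set C₁ := C.rotate u hu with hC₁def
  have hC₁ : C₁.IsCycle := hC.rotate hu
  have hE : ∀ e, e ∈ C₁.edges ↔ e ∈ C.edges := fun e => (C.rotate_edges u hu).mem_iff
  have hlen₁ : C₁.length = C.length := by
    have := (C.rotate_darts u hu).perm.length_eq
    rwa [Walk.length_darts, Walk.length_darts] at this
  have hv₁ : v ∈ C₁.support := by
    rw [mem_support_iff_mem_tail hC₁.not_nil]
    rw [(C.support_rotate u hu).perm.mem_iff]
    rw [← mem_support_iff_mem_tail hC.not_nil]
    exact hv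
  have hQnil : ¬ Q.Nil := Walk.not_nil_of_ne huv
  have hQe₁ : ∀ e ∈ Q.edges, e ∈ C₁.edges := fun e he => (hE e).mpr (hQe e he)
  have he₀ : s(u, Q.getVert 1) ∈ C₁.edges := hQe₁ _ (firstEdge_mem Q hQnil)
  rcases edge_start_cases hC₁ he₀ with h | h
  · obtain ⟨Q', hp, he, hl⟩ := arc_compl_aux hC₁ hv₁ huv Q hQ hQe₁ h
    exact ⟨Q', hp, fun e hee => (hE e).mp (he e hee), hl.trans hlen₁⟩
  · set C₂ := C₁.reverse with hC₂def
    have hC₂ : C₂.IsCycle := isCycle_reverse hC₁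
    have hE₂ : ∀ e, e ∈ C₂.edges ↔ e ∈ C.edges := by
      intro e
      rw [hC₂def, Walk.edges_reverse, List.mem_reverse]
      exact hE e
    have hv₂ : v ∈ C₂.support := by
      rw [hC₂def, Walk.support_reverse, List.mem_reverse]
      exact hv₁
    have hlen₂ : C₂.length = C.length := by
      rw [hC₂def, Walk.length_reverse]; exact hlen₁
    have hQe₂ : ∀ e ∈ Q.edges, e ∈ C₂.edges := fun e he => (hE₂ e).mpr (hQe e he)
    obtain ⟨Q', hp, he, hl⟩ := arc_compl_aux hC₂ hv₂ huv Q hQ hQe₂ h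
    exact ⟨Q', hp, fun e hee => (hE₂ e).mp (he e hee), hl.trans hlen₂⟩

lemma cycle_card_support [DecidableEq V] {a : V} {D : G.Walk a a} (hD : D.IsCycle) :
    D.support.toFinset.card = D.length := by
  have h1 : D.support.toFinset = D.support.tail.toFinset := by
    conv_lhs => rw [D.support_eq_cons]
    rw [List.toFinset_cons, Finset.insert_eq_self.mpr
      (by rw [List.mem_toFinset]; exact end_mem_tail D hD.not_nil)]
  rw [h1, List.toFinset_card_of_nodup hD.support_nodup, List.length_tail, Walk.length_support]
  omega

end StmtAux

open StmtAux in
/-- Statement (1) in the proof of Lemma 4.12: if `G` has no `C`-bad path and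
`d_C(u,v) > 2ℓ + r₁ + r₃`, then `d_G(u,v) ≥ 2ℓ + r₁ + r₃`. -/
theorem stmt9 (G : SimpleGraph V) {w : V} (C : G.Walk w w)
    (hC : IsShortestEvenHole G C)
    (r₁ r₂ r₃ ℓ : ℕ) (hr₁ : r₁ ≤ 1) (hr₂ : r₂ ≤ r₁) (hr₃ : r₃ ≤ r₂) (hℓ : 2 ≤ ℓ)
    (hlen : C.length = 8 * ℓ + 2 * (r₁ + r₂ + r₃))
    (u v : V) (hu : u ∈ C.support) (hv : v ∈ C.support)
    (hd : 2 * ℓ + r₁ + r₃ < cycleDist G C u v)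
    (hgood : ∀ (a b : V) (P : G.Walk a b), ¬ IsCBad G C P) :
    2 * ℓ + r₁ + r₃ ≤ G.dist u v := by
  classical
  by_contra hcon
  push_neg at hcon
  have hCcyc : C.IsCycle := hC.1.1
  have hune : u ≠ v := by
    rintro rfl
    have h0 : (0 : ℕ) ∈ {n | ∃ P : G.Walk u u, P.IsPath ∧ (∀ e ∈ P.edges, e ∈ C.edges) ∧
        P.length = n} := ⟨Walk.nil, Walk.IsPath.nil, by simp, rfl⟩
    have hle := Nat.sInf_le h0
    unfold cycleDist at hd
    omega
  have hreach : G.Reachable u v := by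
    have r1 : G.Reachable w u := ⟨C.takeUntil u hu⟩
    have r2 : G.Reachable w v := ⟨C.takeUntil v hv⟩
    exact r1.symm.trans r2
  have hnadj : ¬ G.Adj u v := by
    intro hadj
    have he : s(u, v) ∈ C.edges := hC.1.2.2 u v hu hv hadj
    have h1 : (1 : ℕ) ∈ {n | ∃ P : G.Walk u v, P.IsPath ∧ (∀ e ∈ P.edges, e ∈ C.edges) ∧
        P.length = n} := by
      refine ⟨Walk.cons hadj Walk.nil, ?_, ?_, by simp⟩
      · rw [Walk.cons_isPath_iff]
        exact ⟨Walk.IsPath.nil, by simpa using hune⟩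
      · intro e hee
        simp only [Walk.edges_cons, Walk.edges_nil, List.mem_singleton] at hee
        rw [hee]; exact he
    have hle := Nat.sInf_le h1
    unfold cycleDist at hd
    omega
  obtain ⟨P, hPpath, hPlen⟩ := hreach.exists_path_of_dist
  have hdist2 : 2 ≤ G.dist u v := by
    have h0 : G.dist u v ≠ 0 := fun h => hune (hreach.dist_eq_zero_iff.mp h)
    have h1 : G.dist u v ≠ 1 := fun h => hnadj (SimpleGraph.dist_eq_one_iff_adj.mp h)
    omega
  apply hgood u v P
  refine ⟨hune, hnadj, hu, hv, hPpath, by omega, by omega, by omega, ?_⟩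
  rintro Q hQpath hQedges ⟨D, hD, hsupD⟩
  have hDcyc : D.IsCycle := hD.1.1
  have hLD : C.length ≤ D.length := hC.2.2 u D hD.1 hD.2.1
  have hset : ∀ z, z ∈ D.support ↔ z ∈ P.support ∨ z ∈ Q.support := by
    intro z
    have := Set.ext_iff.mp hsupD z
    simpa using this
  have hfin : D.support.toFinset = P.support.toFinset ∪ Q.support.toFinset := by
    ext z
    simp only [List.mem_toFinset, Finset.mem_union]
    exact hset z
  have hcardD : D.support.toFinset.card = D.length := cycle_card_support hDcyc
  have hcardP : P.support.toFinset.card = P.length + 1 := by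
    rw [List.toFinset_card_of_nodup hPpath.support_nodup, Walk.length_support]
  have hcardQ : Q.support.toFinset.card = Q.length + 1 := by
    rw [List.toFinset_card_of_nodup hQpath.support_nodup, Walk.length_support]
  have hsubuv : ({u, v} : Finset V) ⊆ P.support.toFinset ∩ Q.support.toFinset := by
    intro z hz
    rw [Finset.mem_insert, Finset.mem_singleton] at hz
    rw [Finset.mem_inter, List.mem_toFinset, List.mem_toFinset]
    rcases hz with rfl | rfl
    · exact ⟨P.start_mem_support, Q.start_mem_support⟩
    · exact ⟨P.end_mem_support, Q.end_mem_support⟩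
  have hcard2 : 2 ≤ (P.support.toFinset ∩ Q.support.toFinset).card := by
    calc 2 = ({u, v} : Finset V).card := (Finset.card_pair hune).symm
    _ ≤ _ := Finset.card_le_card hsubuv
  have hunioncard := Finset.card_union_add_card_inter P.support.toFinset Q.support.toFinset
  rw [← hfin] at hunioncard
  obtain ⟨Q', hQ'p, hQ'e, hQ'len⟩ := arc_compl hCcyc hu hv hune Q hQpath hQedges
  have hmem : Q'.length ∈ {n | ∃ P : G.Walk u v, P.IsPath ∧ (∀ e ∈ P.edges, e ∈ C.edges) ∧
      P.length = n} := ⟨Q', hQ'p, hQ'e, rfl⟩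
  have hle := Nat.sInf_le hmem
  unfold cycleDist at hd
  omega
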